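/- Assume the pure peakon assumption, and define the Weyl functions W(z) = −B_n(z)/(2·z·A_n(z)) and Z(z) = C_n(z)/(2·z·A_n(z)). Then for every 1 ≤ k ≤ n, the function z ↦ W(z) + s_{21}(z)/(2·z·s_{11}(z)) is O(1/z^{k+1}) as z → +∞, and the function z ↦ Z(z) − s_{31}(z)/(2·z·s_{11}(z)) is O(1/z^{k+1}) as z → +∞. -/

import Mathlib

open Matrix

/-- The 3×3 matrix `S(x,m;z) = I − z·m·v(x)·w(x)ᵀ` with
`v(x) = (e^{−x}, −2, e^{x})ᵀ` and `w(x) = (e^{x}, 1, e^{−x})ᵀ`. -/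
noncomputable def Speak (x m z : ℝ) : Matrix (Fin 3) (Fin 3) ℝ :=
  1 - (z * m) • vecMulVec ![Real.exp (-x), -2, Real.exp x] ![Real.exp x, 1, Real.exp (-x)]

/-- `S_{[n,k]}(z) = S_n(z) · S_{n−1}(z) ⋯ S_{n−k+1}(z)`, where `S_j(z) = S(x_j, m_j; z)`. -/
noncomputable def Sblock (x m : ℕ → ℝ) (n k : ℕ) (z : ℝ) : Matrix (Fin 3) (Fin 3) ℝ :=
  ((List.range k).map (fun i => Speak (x (n - i)) (m (n - i)) z)).prod

/-- The vector `(A_j(z), B_j(z), C_j(z))ᵀ = S_j(z) · S_{j−1}(z) ⋯ S_1(z) · (1,0,0)ᵀ`. -/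
noncomputable def ABCvec (x m : ℕ → ℝ) (j : ℕ) (z : ℝ) : Fin 3 → ℝ :=
  (((List.range j).map (fun i => Speak (x (j - i)) (m (j - i)) z)).prod).mulVec ![1, 0, 0]

open Polynomial

noncomputable def Vv (x : ℝ) : Fin 3 → ℝ := ![Real.exp (-x), -2, Real.exp x]
noncomputable def Wv (x : ℝ) : Fin 3 → ℝ := ![Real.exp x, 1, Real.exp (-x)]

noncomputable def SpeakP (x m : ℝ) : Matrix (Fin 3) (Fin 3) ℝ[X] :=
  1 - (X * C m) • ((vecMulVec (Vv x) (Wv x)).map C)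

noncomputable def SblockP (x m : ℕ → ℝ) (n k : ℕ) : Matrix (Fin 3) (Fin 3) ℝ[X] :=
  ((List.range k).map (fun i => SpeakP (x (n - i)) (m (n - i)))).prod

lemma eval_SpeakP (x m z : ℝ) : (SpeakP x m).map (eval z) = Speak x m z := by
  ext i j
  simp only [SpeakP, Speak, Matrix.map_apply, Matrix.sub_apply, Matrix.smul_apply,
    Matrix.one_apply, Vv, Wv, vecMulVec_apply, smul_eq_mul, eval_mul, eval_C, eval_X,
    eval_sub, eval_one]
  rcases eq_or_ne i j with h | h <;> simp [h, mul_comm]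

lemma Sblock_eval (x m : ℕ → ℝ) (n k : ℕ) (z : ℝ) :
    Sblock x m n k z = (SblockP x m n k).map (eval z) := by
  have h : (SblockP x m n k).map (eval z)
      = (Polynomial.evalRingHom z).mapMatrix (SblockP x m n k) := rfl
  rw [h, SblockP, map_list_prod, List.map_map, Sblock]
  congr 1
  apply List.map_congr_left
  intro i _
  simp only [Function.comp_apply, RingHom.mapMatrix_apply]
  rw [show ((Polynomial.evalRingHom z : ℝ[X] →+* ℝ) : ℝ[X] → ℝ) = Polynomial.eval z from rfl]
  exact (eval_SpeakP _ _ z).symm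

lemma ABCvec_eq (x m : ℕ → ℝ) (j : ℕ) (z : ℝ) (t : Fin 3) :
    ABCvec x m j z t = eval z (SblockP x m j j t 0) := by
  have h : ABCvec x m j z t = (Sblock x m j j z).mulVec ![1, 0, 0] t := rfl
  rw [h, Sblock_eval]
  simp [Matrix.mulVec, dotProduct, Fin.sum_univ_three, Matrix.map_apply]

lemma Sblock_apply_eval (x m : ℕ → ℝ) (n k : ℕ) (z : ℝ) (i j : Fin 3) :
    Sblock x m n k z i j = eval z (SblockP x m n k i j) := by
  rw [Sblock_eval]; rfl

lemma SblockP_succ (x m : ℕ → ℝ) (n k : ℕ) :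
    SblockP x m n (k + 1) = SblockP x m n k * SpeakP (x (n - k)) (m (n - k)) := by
  rw [SblockP, List.range_succ, List.map_append, List.prod_append]
  simp [SblockP]

lemma SblockP_split (x m : ℕ → ℝ) (n k : ℕ) (hkn : k ≤ n) :
    SblockP x m n n = SblockP x m n k * SblockP x m (n - k) (n - k) := by
  have hr : List.range n = List.range k ++ (List.range (n - k)).map (k + ·) := by
    rw [← List.range_add]; congr 1; omega
  rw [SblockP, hr, List.map_append, List.prod_append]
  congr 1
  rw [SblockP, List.map_map]
  congr 1
  apply List.map_congr_left
  intro i hi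
  simp only [Function.comp_apply]
  have h2 : n - (k + i) = n - k - i := by omega
  rw [h2]


lemma SpeakP_apply (x m : ℝ) (i j : Fin 3) :
    SpeakP x m i j = (if i = j then (1:ℝ[X]) else 0) + C (-m * (Vv x i * Wv x j)) * X := by
  simp only [SpeakP, Matrix.sub_apply, Matrix.smul_apply, Matrix.map_apply,
    Matrix.one_apply, vecMulVec_apply, smul_eq_mul, Polynomial.C_mul, Polynomial.C_neg]
  ring

lemma SpeakP_natDegree_le (x m : ℝ) (i j : Fin 3) : ((SpeakP x m) i j).natDegree ≤ 1 := by
  rw [SpeakP_apply]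
  apply (Polynomial.natDegree_add_le _ _).trans
  apply max_le
  · rcases eq_or_ne i j with h | h <;> simp [h]
  · apply (Polynomial.natDegree_mul_le).trans
    have h1 : (C (-m * (Vv x i * Wv x j))).natDegree = 0 := Polynomial.natDegree_C _
    have h2 : (X : ℝ[X]).natDegree = 1 := Polynomial.natDegree_X
    omega

lemma entry_natDegree_mul {P Q : Matrix (Fin 3) (Fin 3) ℝ[X]} {a b : ℕ}
    (hP : ∀ i j, (P i j).natDegree ≤ a) (hQ : ∀ i j, (Q i j).natDegree ≤ b) (i j : Fin 3) :
    ((P * Q) i j).natDegree ≤ a + b := by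
  rw [Matrix.mul_apply]
  apply Polynomial.natDegree_sum_le_of_forall_le
  intro t _
  exact (Polynomial.natDegree_mul_le).trans (add_le_add (hP i t) (hQ t j))

lemma SblockP_natDegree_le (x m : ℕ → ℝ) (n : ℕ) : ∀ (k : ℕ) (i j : Fin 3),
    ((SblockP x m n k) i j).natDegree ≤ k := by
  intro k
  induction k with
  | zero =>
    intro i j
    simp only [SblockP, List.range_zero, List.map_nil, List.prod_nil]
    rcases eq_or_ne i j with h | h <;> simp [Matrix.one_apply, h]
  | succ k ih =>
    intro i j
    rw [SblockP_succ]
    exact entry_natDegree_mul ih (SpeakP_natDegree_le _ _) i j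

noncomputable def Tmat (x m : ℕ → ℝ) (n k : ℕ) : Matrix (Fin 3) (Fin 3) ℝ :=
  ((List.range k).map (fun i => (-(m (n - i))) • vecMulVec (Vv (x (n - i))) (Wv (x (n - i))))).prod

lemma Tmat_succ (x m : ℕ → ℝ) (n k : ℕ) :
    Tmat x m n (k + 1) = Tmat x m n k * ((-(m (n - k))) • vecMulVec (Vv (x (n - k))) (Wv (x (n - k)))) := by
  rw [Tmat, List.range_succ, List.map_append, List.prod_append]
  simp [Tmat]

lemma SblockP_coeff_top (x m : ℕ → ℝ) (n : ℕ) : ∀ (k : ℕ) (i j : Fin 3),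
    ((SblockP x m n k) i j).coeff k = Tmat x m n k i j := by
  intro k
  induction k with
  | zero =>
    intro i j
    simp only [SblockP, Tmat, List.range_zero, List.map_nil, List.prod_nil]
    rcases eq_or_ne i j with h | h <;> simp [Matrix.one_apply, h]
  | succ k ih =>
    intro i j
    rw [SblockP_succ, Matrix.mul_apply, Polynomial.finset_sum_coeff]
    have hterm : ∀ t : Fin 3, (SblockP x m n k i t * SpeakP (x (n - k)) (m (n - k)) t j).coeff (k + 1)
        = Tmat x m n k i t * (-(m (n - k)) * (Vv (x (n - k)) t * Wv (x (n - k)) j)) := by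
      intro t
      rw [SpeakP_apply, mul_add, Polynomial.coeff_add]
      have h1 : (SblockP x m n k i t * (if t = j then (1:ℝ[X]) else 0)).coeff (k + 1) = 0 := by
        rcases eq_or_ne t j with h | h
        · rw [if_pos h, mul_one]
          exact Polynomial.coeff_eq_zero_of_natDegree_lt
            (lt_of_le_of_lt (SblockP_natDegree_le x m n k i t) (Nat.lt_succ_self k))
        · simp [h]
      have h2 : SblockP x m n k i t * (C (-(m (n - k)) * (Vv (x (n - k)) t * Wv (x (n - k)) j)) * X)
          = (SblockP x m n k i t * C (-(m (n - k)) * (Vv (x (n - k)) t * Wv (x (n - k)) j))) * X := by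
        ring
      rw [h1, zero_add, h2, Polynomial.coeff_mul_X, Polynomial.coeff_mul_C, ih]
    rw [Tmat_succ, Matrix.mul_apply]
    apply Finset.sum_congr rfl
    intro t _
    rw [hterm t]
    simp only [Matrix.smul_apply, vecMulVec_apply, smul_eq_mul]

lemma dot_WV_pos (a b : ℝ) (hab : a ≠ b) : 0 < Wv a ⬝ᵥ Vv b := by
  simp only [Wv, Vv, dotProduct, Fin.sum_univ_three, Matrix.cons_val_zero, Matrix.cons_val_one,
    Matrix.head_cons, Matrix.cons_val_two, Matrix.tail_cons]
  have h1 : Real.exp (a - b) * Real.exp (b - a) = 1 := by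
    rw [← Real.exp_add]; ring_nf; exact Real.exp_zero
  have h2 : Real.exp (a - b) ≠ 1 := by
    rw [Ne, Real.exp_eq_one_iff]
    intro h; exact hab (by linarith)
  have h3 : (0:ℝ) < (Real.exp (a - b) - 1) ^ 2 :=
    sq_pos_of_ne_zero (sub_ne_zero.mpr h2)
  have e1 : Real.exp a * Real.exp (-b) = Real.exp (a - b) := by
    rw [← Real.exp_add]; ring_nf
  have e2 : Real.exp (-a) * Real.exp b = Real.exp (b - a) := by
    rw [← Real.exp_add]; ring_nf
  nlinarith [Real.exp_pos (a - b), Real.exp_pos (b - a), mul_pos h3 (Real.exp_pos (b - a))]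

lemma vecMulVec_mul (a b c d : Fin 3 → ℝ) :
    vecMulVec a b * vecMulVec c d = (b ⬝ᵥ c) • vecMulVec a d := by
  ext i j
  simp [Matrix.mul_apply, vecMulVec_apply, dotProduct, Fin.sum_univ_three, Matrix.smul_apply]
  ring

lemma Tmat_structure (x m : ℕ → ℝ) (n : ℕ)
    (hm : ∀ i, 1 ≤ i → i ≤ n → 0 < m i) (hx : ∀ i, 1 ≤ i → i < n → x i < x (i + 1)) :
    ∀ k, 1 ≤ k → k ≤ n →
      ∃ c : ℝ, c ≠ 0 ∧ Tmat x m n k = c • vecMulVec (Vv (x n)) (Wv (x (n - k + 1))) := by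
  intro k
  induction k with
  | zero => omega
  | succ k ih =>
    intro _ hk1n
    rcases Nat.eq_zero_or_pos k with hk0 | hkpos
    · subst hk0
      refine ⟨-(m n), ?_, ?_⟩
      · have := hm n (by omega) le_rfl; linarith
      · rw [Tmat_succ]
        have h0 : Tmat x m n 0 = 1 := by simp [Tmat]
        rw [h0, one_mul, show n - 1 + 1 = n from by omega]
        norm_num
    · obtain ⟨c, hc, hT⟩ := ih hkpos (by omega)
      have hlt : x (n - k) < x (n - k + 1) := hx (n - k) (by omega) (by omega)
      have hdot : 0 < Wv (x (n - k + 1)) ⬝ᵥ Vv (x (n - k)) := dot_WV_pos _ _ (by linarith)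
      have hmpos : 0 < m (n - k) := hm (n - k) (by omega) (by omega)
      refine ⟨c * (-(m (n - k))) * (Wv (x (n - k + 1)) ⬝ᵥ Vv (x (n - k))), ?_, ?_⟩
      · apply mul_ne_zero (mul_ne_zero hc (by linarith)) (by linarith)
      · have harg : n - (k + 1) + 1 = n - k := by omega
        rw [Tmat_succ, hT, harg, smul_mul_assoc, mul_smul_comm, vecMulVec_mul, smul_smul,
          smul_smul]

lemma SblockP_00_deg (x m : ℕ → ℝ) (n : ℕ)
    (hm : ∀ i, 1 ≤ i → i ≤ n → 0 < m i) (hx : ∀ i, 1 ≤ i → i < n → x i < x (i + 1))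
    (k : ℕ) (hk1 : 1 ≤ k) (hkn : k ≤ n) :
    (SblockP x m n k 0 0).natDegree = k ∧ (SblockP x m n k 0 0).coeff k ≠ 0 := by
  obtain ⟨c, hc, hT⟩ := Tmat_structure x m n hm hx k hk1 hkn
  have hcoeff : (SblockP x m n k 0 0).coeff k
      = c * (Vv (x n) 0 * Wv (x (n - k + 1)) 0) := by
    rw [SblockP_coeff_top, hT]
    simp [Matrix.smul_apply, vecMulVec_apply]
  have hne : (SblockP x m n k 0 0).coeff k ≠ 0 := by
    rw [hcoeff]
    apply mul_ne_zero hc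
    apply mul_ne_zero
    · simp [Vv, Real.exp_ne_zero]
    · simp [Wv, Real.exp_ne_zero]
  exact ⟨le_antisymm (SblockP_natDegree_le x m n k 0 0)
    (Polynomial.le_natDegree_of_ne_zero hne), hne⟩
lemma detSpeak (x m z : ℝ) : (Speak x m z).det = 1 := by
  have hx := Real.exp_ne_zero x
  simp [Speak, Matrix.det_fin_three, Matrix.sub_apply, Matrix.smul_apply, vecMulVec_apply,
    Matrix.one_apply, Real.exp_neg]
  field_simp
  ring

lemma detSpeakP (x m : ℝ) : (SpeakP x m).det = 1 := by
  apply Polynomial.funext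
  intro z
  have h : eval z (SpeakP x m).det = ((SpeakP x m).map (eval z)).det :=
    (Polynomial.evalRingHom z).map_det (SpeakP x m)
  rw [h, eval_SpeakP, detSpeak]
  simp

noncomputable def TinvP (x m : ℝ) : Matrix (Fin 3) (Fin 3) ℝ[X] :=
  1 + (X * C m) • ((vecMulVec (Vv x) (Wv x)).map C)

lemma vecMulVec_mul' (a b c d : Fin 3 → ℝ) :
    vecMulVec a b * vecMulVec c d = (b ⬝ᵥ c) • vecMulVec a d := by
  ext i j
  simp [Matrix.mul_apply, vecMulVec_apply, dotProduct, Fin.sum_univ_three, Matrix.smul_apply]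
  ring

lemma dotWV_zero (x : ℝ) : Wv x ⬝ᵥ Vv x = 0 := by
  have h : Real.exp x * Real.exp (-x) = 1 := by rw [← Real.exp_add]; simp
  have h2 : Real.exp (-x) * Real.exp x = 1 := by rw [mul_comm]; exact h
  simp [Wv, Vv, dotProduct, Fin.sum_univ_three]
  linarith

lemma NN_zero (x : ℝ) :
    ((vecMulVec (Vv x) (Wv x)).map (C : ℝ → ℝ[X])) * ((vecMulVec (Vv x) (Wv x)).map C) = 0 := by
  have h : (vecMulVec (Vv x) (Wv x)) * (vecMulVec (Vv x) (Wv x)) = 0 := by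
    rw [vecMulVec_mul', dotWV_zero, zero_smul]
  have h2 := congrArg (fun M : Matrix (Fin 3) (Fin 3) ℝ => M.map (C : ℝ → ℝ[X])) h
  simpa [Matrix.map_mul] using h2

lemma SpeakP_mul_TinvP (x m : ℝ) : SpeakP x m * TinvP x m = 1 := by
  rw [SpeakP, TinvP]
  set A := (X * C m) • ((vecMulVec (Vv x) (Wv x)).map (C : ℝ → ℝ[X])) with hA
  have hAA : A * A = 0 := by
    rw [hA, smul_mul_assoc, mul_smul_comm, NN_zero, smul_zero, smul_zero]
  have expand : (1 - A) * (1 + A) = 1 - A * A := by noncomm_ring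
  rw [expand, hAA, sub_zero]

lemma adjugate_SpeakP (x m : ℝ) : (SpeakP x m).adjugate = TinvP x m := by
  calc (SpeakP x m).adjugate = (SpeakP x m).adjugate * (SpeakP x m * TinvP x m) := by
        rw [SpeakP_mul_TinvP, mul_one]
  _ = ((SpeakP x m).adjugate * SpeakP x m) * TinvP x m := (mul_assoc _ _ _).symm
  _ = TinvP x m := by rw [Matrix.adjugate_mul, detSpeakP, one_smul, one_mul]

lemma TinvP_apply (x m : ℝ) (i j : Fin 3) :
    TinvP x m i j = (if i = j then (1:ℝ[X]) else 0) + C (m * (Vv x i * Wv x j)) * X := by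
  simp only [TinvP, Matrix.add_apply, Matrix.smul_apply, Matrix.map_apply,
    Matrix.one_apply, vecMulVec_apply, smul_eq_mul, Polynomial.C_mul]
  ring

lemma TinvP_natDegree_le (x m : ℝ) (i j : Fin 3) : ((TinvP x m) i j).natDegree ≤ 1 := by
  rw [TinvP_apply]
  apply (Polynomial.natDegree_add_le _ _).trans
  apply max_le
  · rcases eq_or_ne i j with h | h <;> simp [h]
  · apply (Polynomial.natDegree_mul_le).trans
    have h1 : (C (m * (Vv x i * Wv x j))).natDegree = 0 := Polynomial.natDegree_C _
    have h2 : (X : ℝ[X]).natDegree = 1 := Polynomial.natDegree_X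
    omega

lemma adj_SblockP_natDegree_le (x m : ℕ → ℝ) (n : ℕ) : ∀ (k : ℕ) (i j : Fin 3),
    (((SblockP x m n k).adjugate) i j).natDegree ≤ k := by
  intro k
  induction k with
  | zero =>
    intro i j
    simp only [SblockP, List.range_zero, List.map_nil, List.prod_nil, Matrix.adjugate_one]
    rcases eq_or_ne i j with h | h <;> simp [Matrix.one_apply, h]
  | succ k ih =>
    intro i j
    rw [SblockP_succ, Matrix.adjugate_mul_distrib, adjugate_SpeakP]
    have h := entry_natDegree_mul (TinvP_natDegree_le (x (n - k)) (m (n - k))) ih i j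
    omega

lemma rat_bigO (P Q : ℝ[X]) (kk d : ℕ) (hQd : Q.natDegree = d)
    (hQ0 : Q ≠ 0) (hPd : P.natDegree ≤ d - kk) (hkd : kk ≤ d) :
    (fun z : ℝ => eval z P / eval z Q) =O[Filter.atTop] (fun z : ℝ => 1 / z ^ kk) := by
  have hXkk : (X : ℝ[X]) ^ kk ≠ 0 := pow_ne_zero _ Polynomial.X_ne_zero
  have hdeg : (P * X ^ kk).degree ≤ Q.degree := by
    rcases eq_or_ne P 0 with h0 | h0
    · simp [h0]
    · have h1 : (P * X ^ kk).natDegree ≤ d := by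
        rw [Polynomial.natDegree_mul h0 hXkk, Polynomial.natDegree_X_pow]
        omega
      rw [Polynomial.degree_eq_natDegree hQ0, hQd]
      exact_mod_cast Polynomial.natDegree_le_iff_degree_le.mp h1
  have hO := Polynomial.isBigO_of_degree_le (P * X ^ kk) Q hdeg
  rw [Asymptotics.isBigO_iff] at hO ⊢
  obtain ⟨c, hc⟩ := hO
  refine ⟨c, ?_⟩
  filter_upwards [hc, Polynomial.eventually_no_roots Q hQ0,
    Filter.eventually_gt_atTop (0:ℝ)] with z hcz hQz hz
  have hQne : eval z Q ≠ 0 := hQz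
  have hzkk : (0:ℝ) < z ^ kk := pow_pos hz _
  rw [Polynomial.eval_mul, Polynomial.eval_pow, Polynomial.eval_X] at hcz
  have h1 : |eval z P| * z ^ kk ≤ c * |eval z Q| := by
    have h2 : ‖eval z P * z ^ kk‖ = |eval z P| * z ^ kk := by
      rw [Real.norm_eq_abs, abs_mul, abs_of_pos hzkk]
    rw [h2, Real.norm_eq_abs] at hcz
    exact hcz
  have h2 : |eval z P / eval z Q| ≤ c / z ^ kk := by
    rw [abs_div, div_le_div_iff₀ (abs_pos.mpr hQne) hzkk]
    linarith [h1]
  calc ‖eval z P / eval z Q‖ = |eval z P / eval z Q| := rfl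
  _ ≤ c / z ^ kk := h2
  _ = c * ‖1 / z ^ kk‖ := by
      rw [Real.norm_eq_abs, abs_of_pos (by positivity : (0:ℝ) < 1 / z ^ kk)]
      ring

lemma minor_a (M : Matrix (Fin 3) (Fin 3) ℝ[X]) :
    M 1 0 * M 0 1 - M 0 0 * M 1 1 = -(M.adjugate 2 2) := by
  rw [Matrix.adjugate_fin_three]; simp; ring

lemma minor_b (M : Matrix (Fin 3) (Fin 3) ℝ[X]) :
    M 1 0 * M 0 2 - M 0 0 * M 1 2 = M.adjugate 1 2 := by
  rw [Matrix.adjugate_fin_three]; simp; ring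

lemma minor_c (M : Matrix (Fin 3) (Fin 3) ℝ[X]) :
    M 0 0 * M 2 1 - M 2 0 * M 0 1 = -(M.adjugate 2 1) := by
  rw [Matrix.adjugate_fin_three]; simp; ring

lemma minor_d (M : Matrix (Fin 3) (Fin 3) ℝ[X]) :
    M 0 0 * M 2 2 - M 2 0 * M 0 2 = M.adjugate 1 1 := by
  rw [Matrix.adjugate_fin_three]; simp; ring

set_option maxHeartbeats 1000000 in
theorem weyl_functions_approx (n : ℕ) (hn : 1 ≤ n) (x m : ℕ → ℝ)
    (hm : ∀ i, 1 ≤ i → i ≤ n → 0 < m i)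
    (hx : ∀ i, 1 ≤ i → i < n → x i < x (i + 1))
    (W Z : ℝ → ℝ)
    (hW : ∀ z, W z = -(ABCvec x m n z 1) / (2 * z * ABCvec x m n z 0))
    (hZ : ∀ z, Z z = ABCvec x m n z 2 / (2 * z * ABCvec x m n z 0))
    (k : ℕ) (hk1 : 1 ≤ k) (hkn : k ≤ n) :
    ((fun z : ℝ => W z + Sblock x m n k z 1 0 / (2 * z * Sblock x m n k z 0 0))
        =O[Filter.atTop] (fun z : ℝ => 1 / z ^ (k + 1))) ∧
    ((fun z : ℝ => Z z - Sblock x m n k z 2 0 / (2 * z * Sblock x m n k z 0 0))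
        =O[Filter.atTop] (fun z : ℝ => 1 / z ^ (k + 1))) := by
  have hsplit := SblockP_split x m n k hkn
  obtain ⟨hAdeg, hAlead⟩ := SblockP_00_deg x m n hm hx n hn le_rfl
  obtain ⟨hsdeg, hslead⟩ := SblockP_00_deg x m n hm hx k hk1 hkn
  have hAP0 : SblockP x m n n 0 0 ≠ 0 := fun h => hAlead (by rw [h, Polynomial.coeff_zero])
  have hs00 : SblockP x m n k 0 0 ≠ 0 := fun h => hslead (by rw [h, Polynomial.coeff_zero])
  have hC2X : (C (2:ℝ) * X) ≠ 0 := by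
    intro h
    have := Polynomial.natDegree_C_mul_X (2:ℝ) two_ne_zero
    rw [h] at this
    simp at this
  -- the common denominator polynomial
  set D : ℝ[X] := C 2 * X * SblockP x m n n 0 0 * SblockP x m n k 0 0 with hD
  have hD0 : D ≠ 0 := mul_ne_zero (mul_ne_zero hC2X hAP0) hs00
  have hDdeg : D.natDegree = n + k + 1 := by
    rw [hD, Polynomial.natDegree_mul (mul_ne_zero hC2X hAP0) hs00,
      Polynomial.natDegree_mul hC2X hAP0, Polynomial.natDegree_C_mul_X (2:ℝ) two_ne_zero,
      hAdeg, hsdeg]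
    omega
  have hDeval : ∀ z : ℝ, eval z D
      = 2 * z * eval z (SblockP x m n n 0 0) * eval z (SblockP x m n k 0 0) := by
    intro z; simp [hD]
  -- entry expansions
  have hApoly : SblockP x m n n 0 0
      = SblockP x m n k 0 0 * SblockP x m (n-k) (n-k) 0 0
        + SblockP x m n k 0 1 * SblockP x m (n-k) (n-k) 1 0
        + SblockP x m n k 0 2 * SblockP x m (n-k) (n-k) 2 0 := by
    rw [hsplit]; rw [Matrix.mul_apply, Fin.sum_univ_three]
  have hBpoly : SblockP x m n n 1 0
      = SblockP x m n k 1 0 * SblockP x m (n-k) (n-k) 0 0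
        + SblockP x m n k 1 1 * SblockP x m (n-k) (n-k) 1 0
        + SblockP x m n k 1 2 * SblockP x m (n-k) (n-k) 2 0 := by
    rw [hsplit]; rw [Matrix.mul_apply, Fin.sum_univ_three]
  have hCpoly : SblockP x m n n 2 0
      = SblockP x m n k 2 0 * SblockP x m (n-k) (n-k) 0 0
        + SblockP x m n k 2 1 * SblockP x m (n-k) (n-k) 1 0
        + SblockP x m n k 2 2 * SblockP x m (n-k) (n-k) 2 0 := by
    rw [hsplit]; rw [Matrix.mul_apply, Fin.sum_univ_three]
  -- degree bounds for minors and u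
  have hadj := adj_SblockP_natDegree_le x m n k
  have hu := SblockP_natDegree_le x m (n-k) (n-k)
  have hmin1 : (SblockP x m n k 1 0 * SblockP x m n k 0 1
      - SblockP x m n k 0 0 * SblockP x m n k 1 1).natDegree ≤ k := by
    rw [minor_a (SblockP x m n k), Polynomial.natDegree_neg]
    exact hadj _ _
  have hmin2 : (SblockP x m n k 1 0 * SblockP x m n k 0 2
      - SblockP x m n k 0 0 * SblockP x m n k 1 2).natDegree ≤ k := by
    rw [minor_b (SblockP x m n k)]
    exact hadj _ _
  have hmin3 : (SblockP x m n k 0 0 * SblockP x m n k 2 1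
      - SblockP x m n k 2 0 * SblockP x m n k 0 1).natDegree ≤ k := by
    rw [minor_c (SblockP x m n k), Polynomial.natDegree_neg]
    exact hadj _ _
  have hmin4 : (SblockP x m n k 0 0 * SblockP x m n k 2 2
      - SblockP x m n k 2 0 * SblockP x m n k 0 2).natDegree ≤ k := by
    rw [minor_d (SblockP x m n k)]
    exact hadj _ _
  -- numerators
  set NW : ℝ[X] := (SblockP x m n k 1 0 * SblockP x m n k 0 1
      - SblockP x m n k 0 0 * SblockP x m n k 1 1) * SblockP x m (n-k) (n-k) 1 0
    + (SblockP x m n k 1 0 * SblockP x m n k 0 2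
      - SblockP x m n k 0 0 * SblockP x m n k 1 2) * SblockP x m (n-k) (n-k) 2 0 with hNW
  set NZ : ℝ[X] := (SblockP x m n k 0 0 * SblockP x m n k 2 1
      - SblockP x m n k 2 0 * SblockP x m n k 0 1) * SblockP x m (n-k) (n-k) 1 0
    + (SblockP x m n k 0 0 * SblockP x m n k 2 2
      - SblockP x m n k 2 0 * SblockP x m n k 0 2) * SblockP x m (n-k) (n-k) 2 0 with hNZ
  have hNWdeg : NW.natDegree ≤ n := by
    apply (Polynomial.natDegree_add_le _ _).trans
    apply max_le <;>
    · apply Polynomial.natDegree_mul_le.trans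
      have := hu 1 0
      have := hu 2 0
      omega
  have hNZdeg : NZ.natDegree ≤ n := by
    apply (Polynomial.natDegree_add_le _ _).trans
    apply max_le <;>
    · apply Polynomial.natDegree_mul_le.trans
      have := hu 1 0
      have := hu 2 0
      omega
  have hnk : n + k + 1 - (k + 1) = n := by omega
  have hOW := rat_bigO NW D (k+1) (n+k+1) hDdeg hD0 (by omega) (by omega)
  have hOZ := rat_bigO NZ D (k+1) (n+k+1) hDdeg hD0 (by omega) (by omega)
  constructor
  · have hev : (fun z : ℝ => W z + Sblock x m n k z 1 0 / (2 * z * Sblock x m n k z 0 0))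
        =ᶠ[Filter.atTop] (fun z : ℝ => eval z NW / eval z D) := by
      filter_upwards [Polynomial.eventually_no_roots _ hAP0,
        Polynomial.eventually_no_roots _ hs00, Filter.eventually_gt_atTop (0:ℝ)] with z hAz hsz hz
      have hAne : eval z (SblockP x m n n 0 0) ≠ 0 := hAz
      have hsne : eval z (SblockP x m n k 0 0) ≠ 0 := hsz
      rw [hW z, ABCvec_eq x m n z 1, ABCvec_eq x m n z 0,
        Sblock_apply_eval x m n k z 1 0, Sblock_apply_eval x m n k z 0 0, hDeval z, hNW,
        hApoly, hBpoly]
      rw [hApoly] at hAne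
      simp only [Polynomial.eval_add, Polynomial.eval_mul, Polynomial.eval_sub] at hAne ⊢
      set a := eval z (SblockP x m n k 0 0) * eval z (SblockP x m (n-k) (n-k) 0 0)
        + eval z (SblockP x m n k 0 1) * eval z (SblockP x m (n-k) (n-k) 1 0)
        + eval z (SblockP x m n k 0 2) * eval z (SblockP x m (n-k) (n-k) 2 0) with ha
      field_simp
      rw [ha]
      ring
    exact hOW.congr' hev.symm (Filter.EventuallyEq.refl _ _)
  · have hev : (fun z : ℝ => Z z - Sblock x m n k z 2 0 / (2 * z * Sblock x m n k z 0 0))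
        =ᶠ[Filter.atTop] (fun z : ℝ => eval z NZ / eval z D) := by
      filter_upwards [Polynomial.eventually_no_roots _ hAP0,
        Polynomial.eventually_no_roots _ hs00, Filter.eventually_gt_atTop (0:ℝ)] with z hAz hsz hz
      have hAne : eval z (SblockP x m n n 0 0) ≠ 0 := hAz
      have hsne : eval z (SblockP x m n k 0 0) ≠ 0 := hsz
      rw [hZ z, ABCvec_eq x m n z 2, ABCvec_eq x m n z 0,
        Sblock_apply_eval x m n k z 2 0, Sblock_apply_eval x m n k z 0 0, hDeval z, hNZ,
        hApoly, hCpoly]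
      rw [hApoly] at hAne
      simp only [Polynomial.eval_add, Polynomial.eval_mul, Polynomial.eval_sub] at hAne ⊢
      set a := eval z (SblockP x m n k 0 0) * eval z (SblockP x m (n-k) (n-k) 0 0)
        + eval z (SblockP x m n k 0 1) * eval z (SblockP x m (n-k) (n-k) 1 0)
        + eval z (SblockP x m n k 0 2) * eval z (SblockP x m (n-k) (n-k) 2 0) with ha
      field_simp
      rw [ha]
      ring
    exact hOZ.congr' hev.symm (Filter.EventuallyEq.refl _ _)
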